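/- For all real numbers N ≥ 2, M and a sequence (a_n) with |a_n| ≤ min{1/2, 1/n} for all n, one has ∏_{n=N}^M (1 + a_n) ≥ 1 - |∑_{n=N}^M a_n| - 1/(N-1). -/

import Mathlib

lemma key_log (n : ℕ) (hn : 2 ≤ n) (x : ℝ) (hx : |x| ≤ 1 / n) :
    x - (1 / ((n : ℝ) - 1) - 1 / n) ≤ Real.log (1 + x) := by
  have hn' : (2 : ℝ) ≤ n := by exact_mod_cast hn
  have hnpos : (0 : ℝ) < n := by linarith
  obtain ⟨hxl, hxu⟩ := abs_le.mp hx
  have h1n : 1 / (n : ℝ) ≤ 1 / 2 := by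
    apply one_div_le_one_div_of_le <;> linarith
  have hpos : 0 < 1 + x := by linarith
  have hlog : 1 - (1 + x)⁻¹ ≤ Real.log (1 + x) := by
    have h := Real.log_le_sub_one_of_pos (show 0 < (1 + x)⁻¹ by positivity)
    rw [Real.log_inv] at h
    linarith
  refine le_trans ?_ hlog
  have hinv : (1 + x)⁻¹ = 1 / (1 + x) := by ring
  rw [hinv]
  have hn1 : (0:ℝ) < (n:ℝ) - 1 := by linarith
  have hxu' : x * n ≤ 1 := by
    have := mul_le_mul_of_nonneg_right hxu hnpos.le
    rwa [one_div, inv_mul_cancel₀ hnpos.ne'] at this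
  have hxl' : -1 ≤ x * n := by
    have := mul_le_mul_of_nonneg_right hxl hnpos.le
    rw [neg_mul, one_div, inv_mul_cancel₀ hnpos.ne'] at this
    linarith
  have hx2 : x ^ 2 * (n:ℝ) ^ 2 ≤ 1 := by nlinarith
  have hfin : x ^ 2 / (1 + x) ≤ 1 / (((n:ℝ) - 1) * n) := by
    rw [div_le_div_iff₀ hpos (by positivity)]
    have h1 : x ^ 2 * (n:ℝ) ^ 2 * ((n:ℝ) - 1) ≤ 1 * ((n:ℝ) - 1) :=
      mul_le_mul_of_nonneg_right hx2 hn1.le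
    have h2 : (n:ℝ) - 1 ≤ n * (1 + x) := by nlinarith
    nlinarith
  have id1 : x - (1 - 1 / (1 + x)) = x ^ 2 / (1 + x) := by
    field_simp
    ring
  have id2 : 1 / ((n:ℝ) - 1) - 1 / n = 1 / (((n:ℝ) - 1) * n) := by
    field_simp
    ring
  linarith

lemma tele (N : ℕ) (hN : 2 ≤ N) : ∀ M, N ≤ M →
    ∑ n ∈ Finset.Icc N M, (1 / ((n : ℝ) - 1) - 1 / n) = 1 / ((N : ℝ) - 1) - 1 / M := by
  intro M
  induction M with
  | zero => intro h; omega
  | succ m ih =>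
    intro h
    rcases Nat.lt_or_ge m N with hm | hm
    · have : N = m + 1 := by omega
      subst this
      simp
    · rw [Finset.sum_Icc_succ_top (by omega), ih hm]
      push_cast
      ring

theorem prod_one_add_ge (N M : ℕ) (hN : 2 ≤ N) (hNM : N ≤ M) (a : ℕ → ℝ)
    (ha : ∀ n ∈ Finset.Icc N M, |a n| ≤ min ((1 : ℝ) / 2) (1 / (n : ℝ))) :
    1 - |∑ n ∈ Finset.Icc N M, a n| - 1 / ((N : ℝ) - 1) ≤
      ∏ n ∈ Finset.Icc N M, (1 + a n) := by
  have hpos : ∀ n ∈ Finset.Icc N M, 0 < 1 + a n := by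
    intro n hn
    have h := (ha n hn).trans (min_le_left _ _)
    have := abs_le.mp h
    linarith [this.1]
  have hsum : ∑ n ∈ Finset.Icc N M, (a n - (1 / ((n : ℝ) - 1) - 1 / n)) ≤
      ∑ n ∈ Finset.Icc N M, Real.log (1 + a n) := by
    apply Finset.sum_le_sum
    intro n hn
    have hn2 : 2 ≤ n := le_trans hN (Finset.mem_Icc.mp hn).1
    exact key_log n hn2 (a n) ((ha n hn).trans (min_le_right _ _))
  rw [Finset.sum_sub_distrib, tele N hN M hNM] at hsum
  have hM : (0:ℝ) < M := by
    have : 0 < M := by omega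
    exact_mod_cast this
  have habs : -|∑ n ∈ Finset.Icc N M, a n| ≤ ∑ n ∈ Finset.Icc N M, a n := neg_abs_le _
  have hlogsum : -|∑ n ∈ Finset.Icc N M, a n| - 1 / ((N : ℝ) - 1) ≤
      ∑ n ∈ Finset.Icc N M, Real.log (1 + a n) := by
    have h1M : 0 ≤ 1 / (M : ℝ) := by positivity
    linarith
  calc 1 - |∑ n ∈ Finset.Icc N M, a n| - 1 / ((N : ℝ) - 1)
      ≤ ∑ n ∈ Finset.Icc N M, Real.log (1 + a n) + 1 := by linarith
    _ ≤ Real.exp (∑ n ∈ Finset.Icc N M, Real.log (1 + a n)) := Real.add_one_le_exp _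
    _ = ∏ n ∈ Finset.Icc N M, (1 + a n) := by
        rw [Real.exp_sum]
        exact Finset.prod_congr rfl fun n hn => Real.exp_log (hpos n hn)
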